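/- With respect to the norm ‖·‖_{w,∞}, the adjoint of δ₀ : H_w → U is u ↦ (x ↦ (1 + ∫_x^∞ w(s)⁻¹ ds)·u), and ‖δ₀‖²_op = 1 + ∫₀^∞ w(s)⁻¹ ds. Moreover the restriction of δ₀ to H_w⁰ = {h : h(∞)=0} has operator norm squared equal to ∫₀^∞ w(s)⁻¹ ds, with adjoint u ↦ (x ↦ (∫_x^∞ w(s)⁻¹ ds)·u). -/

import Mathlib

open MeasureTheory Set Filter Real
open scoped RealInnerProductSpace

lemma stmt9_aux {U : Type*} [NormedAddCommGroup U] [InnerProductSpace ℝ U] [CompleteSpace U]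
    (w : ℝ → ℝ) (hw_cont : Continuous w) (hw1 : ∀ x ∈ Ici (0:ℝ), 1 ≤ w x)
    (hw_inv : IntegrableOn (fun s => (w s)⁻¹) (Ioi 0))
    (f f' : ℝ → U) (L : U)
    (h1 : ∀ y ∈ Ici (0:ℝ), IntervalIntegrable f' volume 0 y)
    (h2 : ∀ y ∈ Ici (0:ℝ), f y = f 0 + ∫ s in (0:ℝ)..y, f' s)
    (h3 : IntegrableOn (fun y => w y * ‖f' y‖ ^ 2) (Ioi 0))
    (h4 : Tendsto f atTop (nhds L)) :
    IntegrableOn f' (Ioi 0) ∧ (∫ x in Ioi (0:ℝ), f' x) = L - f 0 ∧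
    (∫ x in Ioi (0:ℝ), ‖f' x‖) ≤
      Real.sqrt (∫ s in Ioi (0:ℝ), (w s)⁻¹) * Real.sqrt (∫ x in Ioi (0:ℝ), w x * ‖f' x‖ ^ 2) := by
  have hUnion : Ioi (0:ℝ) = ⋃ n : ℕ, Ioc (0:ℝ) n := by
    ext x
    simp only [mem_Ioi, mem_iUnion, mem_Ioc]
    constructor
    · intro hx
      obtain ⟨n, hn⟩ := exists_nat_ge x
      exact ⟨n, hx, hn⟩
    · rintro ⟨n, hn, -⟩; exact hn
  have hmeas : AEStronglyMeasurable f' (volume.restrict (Ioi 0)) := by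
    rw [hUnion, aestronglyMeasurable_iUnion_iff]
    intro n
    exact ((h1 n (mem_Ici.mpr (Nat.cast_nonneg n))).1).aestronglyMeasurable
  have hwpos : ∀ x ∈ Ioi (0:ℝ), 0 < w x := fun x hx =>
    lt_of_lt_of_le one_pos (hw1 x (mem_Ici.2 (le_of_lt hx)))
  have hdom : Integrable (fun x => ((w x)⁻¹ + w x * ‖f' x‖ ^ 2) / 2)
      (volume.restrict (Ioi 0)) := (hw_inv.add h3).div_const 2
  have hint : IntegrableOn f' (Ioi 0) := by
    refine hdom.mono' hmeas ?_
    filter_upwards [ae_restrict_mem measurableSet_Ioi] with x hx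
    have hw := hw1 x (mem_Ici.2 (le_of_lt hx))
    have hwp : 0 < w x := hwpos x hx
    have hnn : 0 ≤ ‖f' x‖ := norm_nonneg _
    nlinarith [sq_nonneg (w x * ‖f' x‖ - 1), inv_pos.mpr hwp,
      mul_pos hwp (inv_pos.mpr hwp), inv_mul_cancel₀ (ne_of_gt hwp)]
  refine ⟨hint, ?_, ?_⟩
  · have h5 : Tendsto (fun y => ∫ s in (0:ℝ)..y, f' s) atTop (nhds (∫ x in Ioi (0:ℝ), f' x)) :=
      intervalIntegral_tendsto_integral_Ioi 0 hint tendsto_id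
    have h6 : Tendsto (fun y => f y - f 0) atTop (nhds (L - f 0)) := h4.sub_const _
    have h7 : Tendsto (fun y => ∫ s in (0:ℝ)..y, f' s) atTop (nhds (L - f 0)) := by
      refine h6.congr' ?_
      filter_upwards [eventually_ge_atTop (0:ℝ)] with y hy
      rw [h2 y hy]; abel
    exact tendsto_nhds_unique h5 h7
  · -- Cauchy–Schwarz / Hölder
    set μ := volume.restrict (Ioi (0:ℝ)) with hμ
    have hwmeas : Measurable w := hw_cont.measurable
    have hg1m : AEStronglyMeasurable (fun x => Real.sqrt ((w x)⁻¹)) μ :=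
      (Real.continuous_sqrt.measurable.comp hwmeas.inv).aestronglyMeasurable
    have hg2m : AEStronglyMeasurable (fun x => Real.sqrt (w x) * ‖f' x‖) μ :=
      ((Real.continuous_sqrt.measurable.comp hwmeas).aestronglyMeasurable).mul hmeas.norm
    have hae := ae_restrict_mem (μ := volume) (measurableSet_Ioi (a := (0:ℝ)))
    have hg1sq : (fun x => Real.sqrt ((w x)⁻¹) ^ 2) =ᵐ[μ] fun x => (w x)⁻¹ := by
      filter_upwards [hae] with x hx
      exact Real.sq_sqrt (le_of_lt (inv_pos.mpr (hwpos x hx)))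
    have hg2sq : (fun x => (Real.sqrt (w x) * ‖f' x‖) ^ 2) =ᵐ[μ] fun x => w x * ‖f' x‖ ^ 2 := by
      filter_upwards [hae] with x hx
      rw [mul_pow, Real.sq_sqrt (le_of_lt (hwpos x hx))]
    have hg1 : MemLp (fun x => Real.sqrt ((w x)⁻¹)) (ENNReal.ofReal 2) μ := by
      rw [show ENNReal.ofReal 2 = 2 by norm_num]
      exact (memLp_two_iff_integrable_sq hg1m).2 (hw_inv.congr hg1sq.symm)
    have hg2 : MemLp (fun x => Real.sqrt (w x) * ‖f' x‖) (ENNReal.ofReal 2) μ := by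
      rw [show ENNReal.ofReal 2 = 2 by norm_num]
      exact (memLp_two_iff_integrable_sq hg2m).2 (h3.congr hg2sq.symm)
    have hpq : Real.HolderConjugate 2 2 := Real.HolderConjugate.two_two
    have hH := MeasureTheory.integral_mul_le_Lp_mul_Lq_of_nonneg hpq
      (Eventually.of_forall fun x => Real.sqrt_nonneg _)
      (Eventually.of_forall fun x => mul_nonneg (Real.sqrt_nonneg _) (norm_nonneg _))
      hg1 hg2
    have hLHS : (∫ x, Real.sqrt ((w x)⁻¹) * (Real.sqrt (w x) * ‖f' x‖) ∂μ)
        = ∫ x, ‖f' x‖ ∂μ := by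
      refine integral_congr_ae ?_
      filter_upwards [hae] with x hx
      have hwp := hwpos x hx
      rw [Real.sqrt_inv, ← mul_assoc,
        inv_mul_cancel₀ (ne_of_gt (Real.sqrt_pos.mpr hwp)), one_mul]
    have hR1 : (∫ x, Real.sqrt ((w x)⁻¹) ^ (2:ℝ) ∂μ) = ∫ s, (w s)⁻¹ ∂μ := by
      refine integral_congr_ae ?_
      filter_upwards [hg1sq] with x hx
      rw [Real.rpow_two, hx]
    have hR2 : (∫ x, (Real.sqrt (w x) * ‖f' x‖) ^ (2:ℝ) ∂μ)
        = ∫ x, w x * ‖f' x‖ ^ 2 ∂μ := by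
      refine integral_congr_ae ?_
      filter_upwards [hg2sq] with x hx
      rw [Real.rpow_two, hx]
    rw [hLHS, hR1, hR2] at hH
    calc (∫ x in Ioi (0:ℝ), ‖f' x‖)
        ≤ (∫ s, (w s)⁻¹ ∂μ) ^ (1/2:ℝ) * (∫ x, w x * ‖f' x‖ ^ 2 ∂μ) ^ (1/2:ℝ) := hH
      _ = Real.sqrt (∫ s in Ioi (0:ℝ), (w s)⁻¹)
          * Real.sqrt (∫ x in Ioi (0:ℝ), w x * ‖f' x‖ ^ 2) := by
          rw [Real.sqrt_eq_rpow, Real.sqrt_eq_rpow]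

/-- with respect to `‖·‖_{w,∞}`, the adjoint of `δ₀ : H_w → U` is
`φ : u ↦ (x ↦ (1 + ∫_x^∞ w(s)⁻¹ ds)·u)` (value at `∞` equal to `u`, derivative
`x ↦ −(w x)⁻¹ • u`), with `‖δ₀‖²_op = 1 + ∫₀^∞ w⁻¹`; the restriction of `δ₀` to
`H_w⁰ = {h : h(∞) = 0}` has adjoint `ψ : u ↦ (x ↦ (∫_x^∞ w(s)⁻¹ ds)·u)` and operator norm
squared `∫₀^∞ w⁻¹`. -/
theorem stmt_9 {U : Type*} [NormedAddCommGroup U] [InnerProductSpace ℝ U]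
    [CompleteSpace U] [SecondCountableTopology U]
    (w : ℝ → ℝ) (hw_cont : Continuous w) (hw_mono : MonotoneOn w (Ici 0))
    (hw0 : w 0 = 1)
    (hw_inv : IntegrableOn (fun s => (w s)⁻¹) (Ioi 0)) (u : U) :
    -- φ(u) tends to u at infinity
    (Tendsto (fun x : ℝ => (1 + ∫ s in Ioi x, (w s)⁻¹) • u) atTop (nhds u)) ∧
    -- adjoint identity for δ₀ on H_w : ⟨φ(u), f⟩_{w,∞} = ⟨u, f(0)⟩
    (∀ (f f' : ℝ → U) (L : U),
      (∀ y ∈ Ici (0:ℝ), IntervalIntegrable f' volume 0 y) →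
      (∀ y ∈ Ici (0:ℝ), f y = f 0 + ∫ s in (0:ℝ)..y, f' s) →
      IntegrableOn (fun y => w y * ‖f' y‖ ^ 2) (Ioi 0) →
      Tendsto f atTop (nhds L) →
      ⟪u, L⟫ + ∫ x in Ioi (0:ℝ), w x * ⟪-((w x)⁻¹) • u, f' x⟫ = ⟪u, f 0⟫) ∧
    -- ‖φ(u)‖²_{w,∞} = (1 + ∫₀^∞ w⁻¹)‖u‖² , which gives ‖δ₀‖²_op = 1 + ∫₀^∞ w⁻¹
    (‖u‖ ^ 2 + ∫ x in Ioi (0:ℝ), w x * ‖-((w x)⁻¹) • u‖ ^ 2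
      = (1 + ∫ s in Ioi (0:ℝ), (w s)⁻¹) * ‖u‖ ^ 2) ∧
    (∀ (f f' : ℝ → U) (L : U),
      (∀ y ∈ Ici (0:ℝ), IntervalIntegrable f' volume 0 y) →
      (∀ y ∈ Ici (0:ℝ), f y = f 0 + ∫ s in (0:ℝ)..y, f' s) →
      IntegrableOn (fun y => w y * ‖f' y‖ ^ 2) (Ioi 0) →
      Tendsto f atTop (nhds L) →
      ‖f 0‖ ^ 2 ≤ (1 + ∫ s in Ioi (0:ℝ), (w s)⁻¹)
        * (‖L‖ ^ 2 + ∫ x in Ioi (0:ℝ), w x * ‖f' x‖ ^ 2)) ∧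
    -- ψ(u) vanishes at infinity
    (Tendsto (fun x : ℝ => (∫ s in Ioi x, (w s)⁻¹) • u) atTop (nhds (0:U))) ∧
    -- adjoint identity for δ₀ restricted to H_w⁰ and its operator norm
    (∀ (f f' : ℝ → U),
      (∀ y ∈ Ici (0:ℝ), IntervalIntegrable f' volume 0 y) →
      (∀ y ∈ Ici (0:ℝ), f y = f 0 + ∫ s in (0:ℝ)..y, f' s) →
      IntegrableOn (fun y => w y * ‖f' y‖ ^ 2) (Ioi 0) →
      Tendsto f atTop (nhds (0:U)) →
      (∫ x in Ioi (0:ℝ), w x * ⟪-((w x)⁻¹) • u, f' x⟫ = ⟪u, f 0⟫) ∧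
      ‖f 0‖ ^ 2 ≤ (∫ s in Ioi (0:ℝ), (w s)⁻¹)
        * (∫ x in Ioi (0:ℝ), w x * ‖f' x‖ ^ 2)) ∧
    (∫ x in Ioi (0:ℝ), w x * ‖-((w x)⁻¹) • u‖ ^ 2
      = (∫ s in Ioi (0:ℝ), (w s)⁻¹) * ‖u‖ ^ 2) := by
  have hw1 : ∀ x ∈ Ici (0:ℝ), 1 ≤ w x := fun x hx => hw0 ▸ hw_mono self_mem_Ici hx hx
  have hwpos : ∀ x ∈ Ioi (0:ℝ), 0 < w x := fun x hx =>
    lt_of_lt_of_le one_pos (hw1 x (mem_Ici.2 (le_of_lt hx)))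
  set A := ∫ s in Ioi (0:ℝ), (w s)⁻¹ with hA_def
  have hA_nonneg : 0 ≤ A :=
    setIntegral_nonneg measurableSet_Ioi fun x hx => inv_nonneg.mpr (le_of_lt (hwpos x hx))
  -- tail identity and limit
  have tail_eq : ∀ y : ℝ, 0 ≤ y →
      (∫ s in Ioi y, (w s)⁻¹) = A - ∫ s in (0:ℝ)..y, (w s)⁻¹ := by
    intro y hy
    have hu : Ioc (0:ℝ) y ∪ Ioi y = Ioi 0 := Ioc_union_Ioi_eq_Ioi hy
    have hdisj : Disjoint (Ioc (0:ℝ) y) (Ioi y) := Ioc_disjoint_Ioi le_rfl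
    have hi1 : IntegrableOn (fun s => (w s)⁻¹) (Ioc 0 y) := hw_inv.mono_set Ioc_subset_Ioi_self
    have hi2 : IntegrableOn (fun s => (w s)⁻¹) (Ioi y) := hw_inv.mono_set (Ioi_subset_Ioi hy)
    have hs := setIntegral_union (f := fun s => (w s)⁻¹) (μ := volume) hdisj
      measurableSet_Ioi hi1 hi2
    rw [hu] at hs
    rw [intervalIntegral.integral_of_le hy]
    rw [hA_def, hs]; ring
  have tail0 : Tendsto (fun y : ℝ => ∫ s in Ioi y, (w s)⁻¹) atTop (nhds 0) := by
    have h5 : Tendsto (fun y : ℝ => ∫ s in (0:ℝ)..y, (w s)⁻¹) atTop (nhds A) :=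
      intervalIntegral_tendsto_integral_Ioi 0 hw_inv tendsto_id
    have h6 : Tendsto (fun y : ℝ => A - ∫ s in (0:ℝ)..y, (w s)⁻¹) atTop (nhds (A - A)) :=
      tendsto_const_nhds.sub h5
    rw [sub_self] at h6
    refine h6.congr' ?_
    filter_upwards [eventually_ge_atTop (0:ℝ)] with y hy
    exact (tail_eq y hy).symm
  -- norm computation (parts 3 and 7)
  have hnorm_eq : EqOn (fun x => w x * ‖-((w x)⁻¹) • u‖ ^ 2)
      (fun x => (w x)⁻¹ * ‖u‖ ^ 2) (Ioi 0) := by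
    intro x hx
    have hwp := hwpos x hx
    simp only [norm_smul, Real.norm_eq_abs, abs_neg, abs_of_nonneg (le_of_lt (inv_pos.mpr hwp)),
      mul_pow]
    field_simp
  have part7 : (∫ x in Ioi (0:ℝ), w x * ‖-((w x)⁻¹) • u‖ ^ 2) = A * ‖u‖ ^ 2 := by
    rw [setIntegral_congr_fun measurableSet_Ioi hnorm_eq, integral_mul_const]
  -- the core adjoint computation and bound
  have core : ∀ (f f' : ℝ → U) (L : U),
      (∀ y ∈ Ici (0:ℝ), IntervalIntegrable f' volume 0 y) →
      (∀ y ∈ Ici (0:ℝ), f y = f 0 + ∫ s in (0:ℝ)..y, f' s) →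
      IntegrableOn (fun y => w y * ‖f' y‖ ^ 2) (Ioi 0) →
      Tendsto f atTop (nhds L) →
      ((∫ x in Ioi (0:ℝ), w x * ⟪-((w x)⁻¹) • u, f' x⟫) = ⟪u, f 0⟫ - ⟪u, L⟫) ∧
      (‖f 0‖ ≤ ‖L‖ + Real.sqrt A * Real.sqrt (∫ x in Ioi (0:ℝ), w x * ‖f' x‖ ^ 2)) := by
    intro f f' L h1 h2 h3 h4
    obtain ⟨hint, hsum, hCS⟩ := stmt9_aux w hw_cont hw1 hw_inv f f' L h1 h2 h3 h4
    constructor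
    · have heq : EqOn (fun x => w x * ⟪-((w x)⁻¹) • u, f' x⟫)
          (fun x => -⟪u, f' x⟫) (Ioi 0) := by
        intro x hx
        have hwp := hwpos x hx
        simp only [real_inner_smul_left]
        field_simp
      rw [setIntegral_congr_fun measurableSet_Ioi heq, integral_neg,
        integral_inner hint, hsum, inner_sub_right]
      ring
    · have h0 : f 0 = L - ∫ x in Ioi (0:ℝ), f' x := by rw [hsum]; abel
      calc ‖f 0‖ = ‖L - ∫ x in Ioi (0:ℝ), f' x‖ := by rw [← h0]
        _ ≤ ‖L‖ + ‖∫ x in Ioi (0:ℝ), f' x‖ := norm_sub_le _ _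
        _ ≤ ‖L‖ + ∫ x in Ioi (0:ℝ), ‖f' x‖ := by
            have := norm_integral_le_integral_norm (μ := volume.restrict (Ioi (0:ℝ))) f'
            linarith
        _ ≤ ‖L‖ + Real.sqrt A * Real.sqrt (∫ x in Ioi (0:ℝ), w x * ‖f' x‖ ^ 2) := by linarith
  refine ⟨?_, ?_, ?_, ?_, ?_, ?_, part7⟩
  · -- part 1
    have h := (tendsto_const_nhds (x := (1:ℝ)) (f := atTop)).add tail0
    rw [add_zero] at h
    have := h.smul_const u
    rwa [one_smul] at this
  · -- part 2
    intro f f' L h1 h2 h3 h4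
    obtain ⟨he, -⟩ := core f f' L h1 h2 h3 h4
    rw [he]; ring
  · -- part 3
    rw [part7]; ring
  · -- part 4
    intro f f' L h1 h2 h3 h4
    obtain ⟨-, hb⟩ := core f f' L h1 h2 h3 h4
    set B := ∫ x in Ioi (0:ℝ), w x * ‖f' x‖ ^ 2 with hB_def
    have hB_nonneg : 0 ≤ B := setIntegral_nonneg measurableSet_Ioi fun x hx =>
      mul_nonneg (le_of_lt (hwpos x hx)) (sq_nonneg _)
    have hsq : ‖f 0‖ * ‖f 0‖ ≤ (‖L‖ + Real.sqrt A * Real.sqrt B) *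
        (‖L‖ + Real.sqrt A * Real.sqrt B) :=
      mul_le_mul hb hb (norm_nonneg _) (le_trans (norm_nonneg _) hb)
    nlinarith [sq_nonneg (Real.sqrt A * ‖L‖ - Real.sqrt B), Real.sq_sqrt hA_nonneg,
      Real.sq_sqrt hB_nonneg, Real.sqrt_nonneg A, Real.sqrt_nonneg B, norm_nonneg L,
      norm_nonneg (f 0)]
  · -- part 5
    have := tail0.smul_const u
    rwa [zero_smul] at this
  · -- part 6
    intro f f' h1 h2 h3 h4
    obtain ⟨he, hb⟩ := core f f' 0 h1 h2 h3 h4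
    set B := ∫ x in Ioi (0:ℝ), w x * ‖f' x‖ ^ 2 with hB_def
    have hB_nonneg : 0 ≤ B := setIntegral_nonneg measurableSet_Ioi fun x hx =>
      mul_nonneg (le_of_lt (hwpos x hx)) (sq_nonneg _)
    constructor
    · rw [he, inner_zero_right]; ring
    · rw [norm_zero, zero_add] at hb
      have hsq : ‖f 0‖ * ‖f 0‖ ≤ (Real.sqrt A * Real.sqrt B) * (Real.sqrt A * Real.sqrt B) :=
        mul_le_mul hb hb (norm_nonneg _) (le_trans (norm_nonneg _) hb)
      nlinarith [Real.sq_sqrt hA_nonneg, Real.sq_sqrt hB_nonneg]
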